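/- arXiv:1912.07507 — 5 statements merged into one kernel-verified Lean document; each statement's English description precedes it below -/
import Mathlib

section
/- The function ω : ℝ → ℝ defined by ω(ρ) = √(2(2ρ−1)(2ρ − 2√(ρ(ρ−1)) − 1)) is monotone decreasing (antitone) on the interval [1, ∞); that is, for all real ρ₁, ρ₂ with 1 ≤ ρ₁ ≤ ρ₂, one has ω(ρ₂) ≤ ω(ρ₁). -/
noncomputable def omega (ρ : ℝ) : ℝ :=
  Real.sqrt (2 * (2 * ρ - 1) * (2 * ρ - 2 * Real.sqrt (ρ * (ρ - 1)) - 1))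

theorem omega_antitone :
    ∀ ρ₁ ρ₂ : ℝ, 1 ≤ ρ₁ → ρ₁ ≤ ρ₂ → omega ρ₂ ≤ omega ρ₁ := by
  intro a b ha hab
  have hb : (1:ℝ) ≤ b := ha.trans hab
  set sa := Real.sqrt (a * (a - 1)) with hsa
  set sb := Real.sqrt (b * (b - 1)) with hsb
  have hsa0 : 0 ≤ sa := Real.sqrt_nonneg _
  have hsb0 : 0 ≤ sb := Real.sqrt_nonneg _
  have hsa2 : sa ^ 2 = a * (a - 1) := by
    rw [hsa, Real.sq_sqrt]; nlinarith
  have hsb2 : sb ^ 2 = b * (b - 1) := by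
    rw [hsb, Real.sq_sqrt]; nlinarith
  have key : (2 * b - 1) * sa ≤ (2 * a - 1) * sb := by
    have hsq : ((2 * b - 1) * sa) ^ 2 ≤ ((2 * a - 1) * sb) ^ 2 := by
      nlinarith [mul_nonneg (sub_nonneg.2 hab) (show (0:ℝ) ≤ a + b - 1 by linarith)]
    have h := Real.sqrt_le_sqrt hsq
    rwa [Real.sqrt_sq (mul_nonneg (by linarith) hsa0), Real.sqrt_sq (mul_nonneg (by linarith) hsb0)] at h
  have da : 0 < 2 * a - 1 + 2 * sa := by nlinarith
  have db : 0 < 2 * b - 1 + 2 * sb := by nlinarith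
  apply Real.sqrt_le_sqrt
  have h1 : (2 * a - 2 * sa - 1) * (2 * a - 1 + 2 * sa) = 1 := by nlinarith
  have h2 : (2 * b - 2 * sb - 1) * (2 * b - 1 + 2 * sb) = 1 := by nlinarith
  have hgoal : 2 * (2 * b - 1) * (2 * b - 2 * sb - 1) * ((2 * a - 1 + 2 * sa) * (2 * b - 1 + 2 * sb))
      ≤ 2 * (2 * a - 1) * (2 * a - 2 * sa - 1) * ((2 * a - 1 + 2 * sa) * (2 * b - 1 + 2 * sb)) := by
    have e1 : 2 * (2 * b - 1) * (2 * b - 2 * sb - 1) * ((2 * a - 1 + 2 * sa) * (2 * b - 1 + 2 * sb))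
        = 2 * (2 * b - 1) * (2 * a - 1 + 2 * sa) := by
      linear_combination (2 * (2 * b - 1) * (2 * a - 1 + 2 * sa)) * h2
    have e2 : 2 * (2 * a - 1) * (2 * a - 2 * sa - 1) * ((2 * a - 1 + 2 * sa) * (2 * b - 1 + 2 * sb))
        = 2 * (2 * a - 1) * (2 * b - 1 + 2 * sb) := by
      linear_combination (2 * (2 * a - 1) * (2 * b - 1 + 2 * sb)) * h1
    rw [e1, e2]
    nlinarith [key]
  exact le_of_mul_le_mul_right hgoal (mul_pos da db)
end

section
/- For every real ρ ≥ 1.6, one has 2ρ > 3·ω(ρ), where ω(ρ) = √(2(2ρ−1)(2ρ − 2√(ρ(ρ−1)) − 1)). -/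
theorem two_rho_gt_three_omega :
    ∀ ρ : ℝ, (1.6 : ℝ) ≤ ρ → 2 * ρ > 3 * omega ρ := by
  intro ρ hρ
  set s := Real.sqrt (ρ * (ρ - 1)) with hs_def
  have hsnn : 0 ≤ s := Real.sqrt_nonneg _
  have hs2 : s ^ 2 = ρ * (ρ - 1) := Real.sq_sqrt (by nlinarith)
  have hs_lb : 3 * ρ / 5 ≤ s := by nlinarith [sq_nonneg (s - 3 * ρ / 5)]
  have hinner : 0 < 2 * ρ - 2 * s - 1 := by nlinarith
  have harg : 0 ≤ 2 * (2 * ρ - 1) * (2 * ρ - 2 * s - 1) := by nlinarith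
  have hω2 : (omega ρ) ^ 2 = 2 * (2 * ρ - 1) * (2 * ρ - 2 * s - 1) := by
    rw [omega, ← hs_def]; exact Real.sq_sqrt harg
  have hωnn : 0 ≤ omega ρ := Real.sqrt_nonneg _
  have hkey : 9 * (omega ρ) ^ 2 < 4 * ρ ^ 2 := by
    rw [hω2]; nlinarith [sq_nonneg ρ, mul_pos hinner (by nlinarith : (0:ℝ) < ρ ^ 2)]
  nlinarith [sq_nonneg (2 * ρ - 3 * omega ρ), sq_nonneg (2 * ρ + 3 * omega ρ)]
end

section
/- For every real ρ ≥ 1.6, one has arccos(1/ω(ρ)) < π/4, where ω(ρ) = √(2(2ρ−1)(2ρ − 2√(ρ(ρ−1)) − 1)). In particular the angle 2·arccos(1/ω(ρ)) is strictly less than π/2. -/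
theorem arccos_inv_omega_lt_pi_div_four :
    ∀ ρ : ℝ, (1.6 : ℝ) ≤ ρ →
      Real.arccos (1 / omega ρ) < Real.pi / 4 ∧
      2 * Real.arccos (1 / omega ρ) < Real.pi / 2 := by
  intro ρ hρ
  have hρ1 : (1 : ℝ) < ρ := by linarith
  set s := Real.sqrt (ρ * (ρ - 1)) with hs_def
  have hs0 : 0 ≤ ρ * (ρ - 1) := by nlinarith
  have hs_sq : s ^ 2 = ρ * (ρ - 1) := Real.sq_sqrt hs0
  have hs_pos : 0 < s := Real.sqrt_pos.mpr (by nlinarith)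
  -- key identity: (2ρ-1)^2 - (2s)^2 = 1
  have hid : (2 * ρ - 1 - 2 * s) * (2 * ρ - 1 + 2 * s) = 1 := by nlinarith [hs_sq]
  have hplus : 0 < 2 * ρ - 1 + 2 * s := by nlinarith
  have hminus : 0 < 2 * ρ - 1 - 2 * s := by
    by_contra h
    push_neg at h
    nlinarith
  set A := 2 * (2 * ρ - 1) * (2 * ρ - 2 * s - 1) with hA_def
  have hA1 : 1 < A := by nlinarith
  have hA2 : A < 2 := by nlinarith
  have hω : omega ρ = Real.sqrt A := by rw [omega]
  have hω1 : 1 < omega ρ := by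
    rw [hω]
    have := Real.sqrt_lt_sqrt (by norm_num) hA1
    simpa using this
  have hω2 : omega ρ < Real.sqrt 2 := by
    rw [hω]
    exact Real.sqrt_lt_sqrt (by linarith) hA2
  have hωpos : 0 < omega ρ := by linarith
  have hx1 : 1 / omega ρ < 1 := by
    rw [div_lt_one hωpos]; exact hω1
  have hx2 : Real.sqrt 2 / 2 < 1 / omega ρ := by
    rw [div_lt_div_iff₀ (by norm_num) hωpos]
    nlinarith [Real.sq_sqrt (by norm_num : (0:ℝ) ≤ 2), Real.sqrt_nonneg 2]
  have hxpos : 0 < 1 / omega ρ := by positivity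
  have harc : Real.arccos (Real.sqrt 2 / 2) = Real.pi / 4 := by
    rw [show Real.sqrt 2 / 2 = Real.cos (Real.pi / 4) by rw [Real.cos_pi_div_four]]
    exact Real.arccos_cos (by positivity) (by linarith [Real.pi_pos])
  have hmono := Real.strictAntiOn_arccos (a := Real.sqrt 2 / 2) (b := 1 / omega ρ)
    ⟨by nlinarith [Real.sqrt_nonneg 2], by nlinarith [Real.sq_sqrt (by norm_num : (0:ℝ) ≤ 2), Real.sqrt_nonneg 2]⟩
    ⟨by linarith, le_of_lt hx1⟩ hx2
  rw [harc] at hmono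
  exact ⟨hmono, by linarith⟩
end

section
/- Let n ≥ 1, let z₀, z₁ be distinct points of Euclidean space ℝⁿ, let h = ‖z₁ − z₀‖, and let φ be a real number with 0 ≤ φ < π/2. Let x ∈ ℝⁿ be a point such that (x = z₀ or the undirected angle between the vectors x − z₀ and z₁ − z₀ is at most φ) and (x = z₁ or the undirected angle between the vectors x − z₁ and z₀ − z₁ is at most φ). Then the distance from x to the closed segment [z₀, z₁] is at most (h/2)·tan(φ). -/
open InnerProductGeometry in
lemma cone_aux {E : Type*} [NormedAddCommGroup E] [InnerProductSpace ℝ E]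
    (v u : E) (hv : v ≠ 0) (hu : u ≠ 0) (φ : ℝ) (hφ0 : 0 ≤ φ) (hφ : φ < Real.pi / 2)
    (hang : angle v u ≤ φ) :
    0 < (inner ℝ v u : ℝ) / ‖u‖ ^ 2 ∧
      ‖v - ((inner ℝ v u : ℝ) / ‖u‖ ^ 2) • u‖ ≤
        ((inner ℝ v u : ℝ) / ‖u‖ ^ 2) * ‖u‖ * Real.tan φ := by
  have hπ := Real.pi_pos
  have hc : 0 < Real.cos φ := Real.cos_pos_of_mem_Ioo ⟨by linarith, hφ⟩
  have hs : 0 ≤ Real.sin φ := Real.sin_nonneg_of_nonneg_of_le_pi hφ0 (by linarith)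
  have hφπ : φ ≤ Real.pi := by linarith
  have hcos : Real.cos φ ≤ Real.cos (angle v u) :=
    Real.cos_le_cos_of_nonneg_of_le_pi (angle_nonneg v u) hφπ hang
  rw [cos_angle] at hcos
  have hvn : 0 < ‖v‖ := norm_pos_iff.mpr hv
  have hun : 0 < ‖u‖ := norm_pos_iff.mpr hu
  have hip : Real.cos φ * (‖v‖ * ‖u‖) ≤ (inner ℝ v u : ℝ) := by
    rw [le_div_iff₀ (by positivity)] at hcos; linarith
  have hipos : 0 < (inner ℝ v u : ℝ) := lt_of_lt_of_le (by positivity) hip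
  set t : ℝ := (inner ℝ v u : ℝ) / ‖u‖ ^ 2 with ht
  have ht0 : 0 < t := div_pos hipos (by positivity)
  have hvu : (inner ℝ v u : ℝ) = t * ‖u‖ ^ 2 := by rw [ht]; field_simp
  set w : E := v - t • u with hw
  have horth : (inner ℝ w u : ℝ) = 0 := by
    rw [hw, inner_sub_left, real_inner_smul_left, real_inner_self_eq_norm_sq]
    rw [hvu]; ring
  have hpyth : ‖v‖ ^ 2 = ‖w‖ ^ 2 + t ^ 2 * ‖u‖ ^ 2 := by
    have hv' : v = w + t • u := by rw [hw]; abel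
    rw [hv', norm_add_sq_real, real_inner_smul_right, horth, norm_smul, mul_pow]
    simp [abs_of_pos ht0]
  have hsc : Real.sin φ ^ 2 + Real.cos φ ^ 2 = 1 := Real.sin_sq_add_cos_sq φ
  have hip' : Real.cos φ * (‖v‖ * ‖u‖) ≤ t * ‖u‖ ^ 2 := by rw [← hvu]; exact hip
  have hsq : (Real.cos φ * (‖v‖ * ‖u‖)) ^ 2 ≤ (t * ‖u‖ ^ 2) ^ 2 :=
    pow_le_pow_left₀ (by positivity) hip' 2
  have hsq2 : Real.cos φ ^ 2 * ((‖w‖ ^ 2 + t ^ 2 * ‖u‖ ^ 2) * ‖u‖ ^ 2)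
      ≤ t ^ 2 * (‖u‖ ^ 2) ^ 2 := by
    calc Real.cos φ ^ 2 * ((‖w‖ ^ 2 + t ^ 2 * ‖u‖ ^ 2) * ‖u‖ ^ 2)
        = (Real.cos φ * (‖v‖ * ‖u‖)) ^ 2 := by rw [← hpyth]; ring
      _ ≤ (t * ‖u‖ ^ 2) ^ 2 := hsq
      _ = t ^ 2 * (‖u‖ ^ 2) ^ 2 := by ring
  have hkey : ‖w‖ ^ 2 * Real.cos φ ^ 2 ≤ Real.sin φ ^ 2 * (t * ‖u‖) ^ 2 := by
    nlinarith [hsq2, hsc, pow_pos hun 2]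
  have hmul : ‖w‖ * Real.cos φ ≤ Real.sin φ * (t * ‖u‖) := by
    nlinarith [norm_nonneg w, mul_nonneg hs (mul_nonneg ht0.le hun.le),
      mul_nonneg (norm_nonneg w) hc.le]
  refine ⟨ht0, ?_⟩
  rw [Real.tan_eq_sin_div_cos,
    show t * ‖u‖ * (Real.sin φ / Real.cos φ) = Real.sin φ * (t * ‖u‖) / Real.cos φ by ring,
    le_div_iff₀ hc]
  exact hmul

theorem cone_intersection_dist_to_segment
    (n : ℕ) (hn : 1 ≤ n) (z₀ z₁ : EuclideanSpace ℝ (Fin n)) (hz : z₀ ≠ z₁)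
    (φ : ℝ) (hφ0 : 0 ≤ φ) (hφ : φ < Real.pi / 2)
    (x : EuclideanSpace ℝ (Fin n))
    (hx0 : x = z₀ ∨ InnerProductGeometry.angle (x - z₀) (z₁ - z₀) ≤ φ)
    (hx1 : x = z₁ ∨ InnerProductGeometry.angle (x - z₁) (z₀ - z₁) ≤ φ) :
    Metric.infDist x (segment ℝ z₀ z₁) ≤ (‖z₁ - z₀‖ / 2) * Real.tan φ := by
  have hπ := Real.pi_pos
  have htan : 0 ≤ Real.tan φ := Real.tan_nonneg_of_nonneg_of_le_pi_div_two hφ0 hφ.le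
  have hrhs : 0 ≤ (‖z₁ - z₀‖ / 2) * Real.tan φ := by positivity
  rcases hx0 with rfl | hx0
  · rw [Metric.infDist_zero_of_mem (left_mem_segment ℝ x z₁)]; exact hrhs
  rcases hx1 with rfl | hx1
  · rw [Metric.infDist_zero_of_mem (right_mem_segment ℝ z₀ x)]; exact hrhs
  have hv0 : x - z₀ ≠ 0 := by
    intro h; rw [h, InnerProductGeometry.angle_zero_left] at hx0; linarith
  have hv1 : x - z₁ ≠ 0 := by
    intro h; rw [h, InnerProductGeometry.angle_zero_left] at hx1; linarith
  have hu : z₁ - z₀ ≠ 0 := sub_ne_zero.mpr (Ne.symm hz)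
  have hu' : z₀ - z₁ ≠ 0 := sub_ne_zero.mpr hz
  obtain ⟨ht0, hw0⟩ := cone_aux (x - z₀) (z₁ - z₀) hv0 hu φ hφ0 hφ hx0
  obtain ⟨hs0, hw1⟩ := cone_aux (x - z₁) (z₀ - z₁) hv1 hu' φ hφ0 hφ hx1
  have hun : 0 < ‖z₁ - z₀‖ := norm_pos_iff.mpr hu
  have hnormrev : ‖z₀ - z₁‖ = ‖z₁ - z₀‖ := norm_sub_rev _ _
  have hinner : (inner ℝ (x - z₁) (z₀ - z₁) : ℝ)
      = ‖z₁ - z₀‖ ^ 2 - (inner ℝ (x - z₀) (z₁ - z₀) : ℝ) := by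
    have h1 : x - z₁ = (x - z₀) - (z₁ - z₀) := by abel
    have h2 : z₀ - z₁ = -(z₁ - z₀) := by abel
    rw [h1, h2, inner_neg_right, inner_sub_left, real_inner_self_eq_norm_sq]
    ring
  set t : ℝ := (inner ℝ (x - z₀) (z₁ - z₀) : ℝ) / ‖z₁ - z₀‖ ^ 2 with htdef
  have hst : (inner ℝ (x - z₁) (z₀ - z₁) : ℝ) / ‖z₀ - z₁‖ ^ 2 = 1 - t := by
    rw [hinner, hnormrev, htdef]
    field_simp
  rw [hst] at hs0 hw1
  have hweq : (x - z₁) - (1 - t) • (z₀ - z₁) = (x - z₀) - t • (z₁ - z₀) := by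
    module
  rw [hweq, hnormrev] at hw1
  have hpmem : z₀ + t • (z₁ - z₀) ∈ segment ℝ z₀ z₁ := by
    rw [segment_eq_image']
    exact ⟨t, ⟨ht0.le, by linarith⟩, rfl⟩
  have hd : Metric.infDist x (segment ℝ z₀ z₁) ≤ ‖(x - z₀) - t • (z₁ - z₀)‖ := by
    have := Metric.infDist_le_dist_of_mem (x := x) hpmem
    rwa [dist_eq_norm, show x - (z₀ + t • (z₁ - z₀)) = (x - z₀) - t • (z₁ - z₀) by abel]
      at this
  nlinarith [hw0, hw1, hd, mul_nonneg hun.le htan]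
end

section
/- Let n ≥ 1, let z₀, z₁ be distinct points of Euclidean space ℝⁿ, let h = ‖z₁ − z₀‖, and let φ be a real number with 0 ≤ φ < π/2. Let γ : [0,1] → ℝⁿ be a continuous curve with γ(0) = z₀ and γ(1) = z₁ such that for every t ∈ [0,1]: (γ(t) = z₀ or the undirected angle between the vectors γ(t) − z₀ and z₁ − z₀ is at most φ) and (γ(t) = z₁ or the undirected angle between the vectors γ(t) − z₁ and z₀ − z₁ is at most φ). Then the Hausdorff distance between the image of γ and the closed segment [z₀, z₁] is at most (h/2)·tan(φ). -/
set_option maxHeartbeats 1000000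

open Real Set Metric
open scoped RealInnerProductSpace

/-- Key cone lemma: if the angle between `v` and `u ≠ 0` is at most `φ < π/2`, then
`⟪v,u⟫ ≥ 0` and the component of `v` orthogonal to `u` has norm at most
`(⟪v,u⟫/‖u‖) * tan φ`. -/
lemma cone_key {n : ℕ} (v u : EuclideanSpace ℝ (Fin n)) (hu : u ≠ 0)
    {φ : ℝ} (hφ0 : 0 ≤ φ) (hφ : φ < Real.pi / 2)
    (hang : InnerProductGeometry.angle v u ≤ φ) :
    0 ≤ ⟪v, u⟫ ∧ ‖v - (⟪v, u⟫ / ‖u‖ ^ 2) • u‖ ≤ (⟪v, u⟫ / ‖u‖) * Real.tan φ := by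
  have hu0 : (0 : ℝ) < ‖u‖ := norm_pos_iff.2 hu
  have hπ : φ ≤ Real.pi := by linarith [Real.pi_pos]
  have hcosφ : 0 < Real.cos φ :=
    Real.cos_pos_of_mem_Ioo ⟨by linarith [Real.pi_pos], hφ⟩
  have hcos : Real.cos φ ≤ ⟪v, u⟫ / (‖v‖ * ‖u‖) := by
    have := Real.cos_le_cos_of_nonneg_of_le_pi
      (InnerProductGeometry.angle_nonneg v u) hπ hang
    rwa [InnerProductGeometry.cos_angle] at this
  have hv : v ≠ 0 := by
    rintro rfl
    simp at hcos
    linarith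
  have hv0 : (0 : ℝ) < ‖v‖ := norm_pos_iff.2 hv
  have hineq : ‖v‖ * ‖u‖ * Real.cos φ ≤ ⟪v, u⟫ := by
    have := (le_div_iff₀ (by positivity)).1 hcos
    linarith
  have ha0 : 0 ≤ ⟪v, u⟫ := le_trans (by positivity) hineq
  refine ⟨ha0, ?_⟩
  obtain ⟨a, ha⟩ : ∃ a : ℝ, ⟪v, u⟫ = a := ⟨_, rfl⟩
  rw [ha] at hineq ha0 ⊢
  -- norm squared of the orthogonal component
  have hw2 : ‖v - (a / ‖u‖ ^ 2) • u‖ ^ 2 = ‖v‖ ^ 2 - a ^ 2 / ‖u‖ ^ 2 := by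
    have h1 : ‖v - (a / ‖u‖ ^ 2) • u‖ ^ 2
        = ‖v‖ ^ 2 - 2 * ⟪v, (a / ‖u‖ ^ 2) • u⟫ + ‖(a / ‖u‖ ^ 2) • u‖ ^ 2 := by
      rw [@norm_sub_sq_real]
    rw [h1, real_inner_smul_right, ha, norm_smul]
    rw [Real.norm_eq_abs, abs_of_nonneg (by positivity)]
    rw [mul_pow]
    have hune : (‖u‖ : ℝ) ≠ 0 := hu0.ne'
    field_simp
    ring
  have htan : 0 ≤ Real.tan φ := Real.tan_nonneg_of_nonneg_of_le_pi_div_two hφ0 hφ.le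
  have hrhs : 0 ≤ (a / ‖u‖) * Real.tan φ := by positivity
  have hkey : ‖v - (a / ‖u‖ ^ 2) • u‖ ^ 2 ≤ ((a / ‖u‖) * Real.tan φ) ^ 2 := by
    rw [hw2, Real.tan_eq_sin_div_cos]
    have hs := Real.sin_sq_add_cos_sq φ
    have h2 : (‖v‖ * ‖u‖ * Real.cos φ) ^ 2 ≤ a ^ 2 := by
      have := mul_self_le_mul_self (by positivity) hineq
      nlinarith
    have hbexp : ((a / ‖u‖) * (Real.sin φ / Real.cos φ)) ^ 2
        = (a ^ 2 * Real.sin φ ^ 2) / (‖u‖ ^ 2 * Real.cos φ ^ 2) := by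
      field_simp
    rw [hbexp, le_div_iff₀ (by positivity)]
    have hdm2 : a ^ 2 / ‖u‖ ^ 2 * (‖u‖ ^ 2 * Real.cos φ ^ 2) = a ^ 2 * Real.cos φ ^ 2 := by
      field_simp
    nlinarith [h2, hs, hdm2]
  calc ‖v - (a / ‖u‖ ^ 2) • u‖
      = Real.sqrt (‖v - (a / ‖u‖ ^ 2) • u‖ ^ 2) := (Real.sqrt_sq (norm_nonneg _)).symm
    _ ≤ Real.sqrt (((a / ‖u‖) * Real.tan φ) ^ 2) := Real.sqrt_le_sqrt hkey
    _ = (a / ‖u‖) * Real.tan φ := Real.sqrt_sq hrhs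

theorem cone_curve_hausdorffDist_segment
    (n : ℕ) (hn : 1 ≤ n) (z₀ z₁ : EuclideanSpace ℝ (Fin n)) (hz : z₀ ≠ z₁)
    (φ : ℝ) (hφ0 : 0 ≤ φ) (hφ : φ < Real.pi / 2)
    (γ : ℝ → EuclideanSpace ℝ (Fin n))
    (hγc : ContinuousOn γ (Set.Icc 0 1)) (hγ0 : γ 0 = z₀) (hγ1 : γ 1 = z₁)
    (hcone : ∀ t ∈ Set.Icc (0 : ℝ) 1,
      (γ t = z₀ ∨ InnerProductGeometry.angle (γ t - z₀) (z₁ - z₀) ≤ φ) ∧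
      (γ t = z₁ ∨ InnerProductGeometry.angle (γ t - z₁) (z₀ - z₁) ≤ φ)) :
    Metric.hausdorffDist (γ '' Set.Icc (0 : ℝ) 1) (segment ℝ z₀ z₁)
      ≤ (‖z₁ - z₀‖ / 2) * Real.tan φ := by
  set u : EuclideanSpace ℝ (Fin n) := z₁ - z₀ with hu_def
  have hu : u ≠ 0 := sub_ne_zero.2 hz.symm
  have hu0 : (0 : ℝ) < ‖u‖ := norm_pos_iff.2 hu
  have htan : 0 ≤ Real.tan φ := Real.tan_nonneg_of_nonneg_of_le_pi_div_two hφ0 hφ.le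
  have hB : 0 ≤ (‖u‖ / 2) * Real.tan φ := by positivity
  set f : ℝ → ℝ := fun t => ⟪γ t - z₀, u⟫ with hf_def
  -- main pointwise claim
  have claim : ∀ t ∈ Set.Icc (0 : ℝ) 1,
      (0 ≤ f t ∧ f t ≤ ‖u‖ ^ 2) ∧
      dist (γ t) (z₀ + (f t / ‖u‖ ^ 2) • u) ≤ (‖u‖ / 2) * Real.tan φ := by
    intro t ht
    obtain ⟨h0, h1⟩ := hcone t ht
    have hdist : dist (γ t) (z₀ + (f t / ‖u‖ ^ 2) • u)
        = ‖(γ t - z₀) - (f t / ‖u‖ ^ 2) • u‖ := by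
      rw [dist_eq_norm]
      congr 1
      abel
    rcases h0 with hz0 | hang0
    · have hf0 : f t = 0 := by simp [hf_def, hz0]
      refine ⟨⟨le_of_eq hf0.symm, by rw [hf0]; positivity⟩, ?_⟩
      rw [hdist, hf0]
      simp [hz0, hB]
    rcases h1 with hz1 | hang1
    · have hf1 : f t = ‖u‖ ^ 2 := by
        show ⟪γ t - z₀, u⟫ = ‖u‖ ^ 2
        rw [hz1, ← hu_def]
        exact real_inner_self_eq_norm_sq u
      refine ⟨⟨by rw [hf1]; positivity, le_of_eq hf1⟩, ?_⟩
      rw [hdist, hf1, div_self (by positivity), one_smul]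
      have : γ t - z₀ - u = 0 := by rw [hz1, hu_def]; abel
      simp [this, hB]
    · -- both angle conditions hold
      obtain ⟨ha0, hw0⟩ := cone_key (γ t - z₀) u hu hφ0 hφ hang0
      have hneg : z₀ - z₁ = -u := by rw [hu_def]; abel
      obtain ⟨ha1, hw1⟩ := cone_key (γ t - z₁) (-u) (neg_ne_zero.2 hu) hφ0 hφ
        (by rwa [hneg] at hang1)
      have hinner1 : ⟪γ t - z₁, -u⟫ = ‖u‖ ^ 2 - f t := by
        have : γ t - z₁ = (γ t - z₀) - u := by rw [hu_def]; abel
        rw [this, inner_neg_right, inner_sub_left, real_inner_self_eq_norm_sq]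
        show -(f t - ‖u‖ ^ 2) = ‖u‖ ^ 2 - f t
        ring
      rw [hinner1] at ha1 hw1
      have hfle : f t ≤ ‖u‖ ^ 2 := by linarith
      refine ⟨⟨ha0, hfle⟩, ?_⟩
      -- rewrite the vector in hw1
      have hvec : (γ t - z₁) - ((‖u‖ ^ 2 - f t) / ‖(-u : EuclideanSpace ℝ (Fin n))‖ ^ 2) • (-u)
          = (γ t - z₀) - (f t / ‖u‖ ^ 2) • u := by
        rw [norm_neg]
        have hc : (‖u‖ ^ 2 - f t) / ‖u‖ ^ 2 = 1 - f t / ‖u‖ ^ 2 := by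
          field_simp
        rw [hc]
        have : γ t - z₁ = (γ t - z₀) - u := by rw [hu_def]; abel
        rw [this]
        module
      rw [hvec, norm_neg] at hw1
      rw [hdist]
      rcases le_or_gt (f t) (‖u‖ ^ 2 / 2) with hc | hc
      · refine le_trans hw0 ?_
        have : f t / ‖u‖ ≤ ‖u‖ / 2 := by
          rw [div_le_iff₀ hu0]
          nlinarith
        exact mul_le_mul_of_nonneg_right this htan
      · refine le_trans hw1 ?_
        have : (‖u‖ ^ 2 - f t) / ‖u‖ ≤ ‖u‖ / 2 := by
          rw [div_le_iff₀ hu0]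
          nlinarith
        exact mul_le_mul_of_nonneg_right this htan
  -- continuity of f and IVT
  have hfc : ContinuousOn f (Set.Icc 0 1) := by
    exact ContinuousOn.inner (hγc.sub continuousOn_const) continuousOn_const
  have hf0 : f 0 = 0 := by simp [hf_def, hγ0]
  have hf1 : f 1 = ‖u‖ ^ 2 := by
    show ⟪γ 1 - z₀, u⟫ = ‖u‖ ^ 2
    rw [hγ1, ← hu_def]
    exact real_inner_self_eq_norm_sq u
  apply Metric.hausdorffDist_le_of_mem_dist hB
  · rintro x ⟨t, ht, rfl⟩
    obtain ⟨⟨hl, hr⟩, hd⟩ := claim t ht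
    refine ⟨z₀ + (f t / ‖u‖ ^ 2) • u, ?_, hd⟩
    rw [segment_eq_image']
    exact ⟨f t / ‖u‖ ^ 2, ⟨by positivity, by rw [div_le_one (by positivity)]; exact hr⟩, rfl⟩
  · intro y hy
    rw [segment_eq_image'] at hy
    obtain ⟨θ, hθ, rfl⟩ := hy
    have hmem : θ * ‖u‖ ^ 2 ∈ Set.Icc (f 0) (f 1) := by
      rw [hf0, hf1]
      constructor
      · exact mul_nonneg hθ.1 (by positivity)
      · nlinarith [hθ.2, sq_nonneg ‖u‖]
    obtain ⟨t, ht, hft⟩ := intermediate_value_Icc zero_le_one hfc hmem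
    obtain ⟨_, hd⟩ := claim t ht
    refine ⟨γ t, Set.mem_image_of_mem γ ht, ?_⟩
    rw [dist_comm]
    have hθeq : f t / ‖u‖ ^ 2 = θ := by
      rw [hft]
      field_simp
    rwa [hθeq] at hd
end
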